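/- Let T' = #·T·$ with sentinels #, $ ∉ Σ. If W is a nonempty string over Σ that is left-maximal in T' and occurs at least twice in T', then there exists a (possibly empty) string V such that WV is right-maximal in T', the number of occurrences of WV in T' equals the number of occurrences of W in T', and the set of left-extensions of WV in T' equals that of W. Consequently WV is a maximal repeat of T'. -/

import Mathlib

/-- Number of (factor) occurrences of `W` in `T`: the number of starting
positions `i` such that `W` is a prefix of `T.drop i`. -/
def occ {α : Type*} [DecidableEq α] (T W : List α) : ℕ :=
  (List.range (T.length + 1)).countP fun i => decide (W <+: T.drop i)

/-- `W` is right-maximal in `T`: at least two distinct right extensions occur. -/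
def rightMax {α : Type*} (T W : List α) : Prop :=
  ∃ b c, b ≠ c ∧ (W ++ [b]) <:+: T ∧ (W ++ [c]) <:+: T

/-- `W` is left-maximal in `T`: at least two distinct left extensions occur. -/
def leftMax {α : Type*} (T W : List α) : Prop :=
  ∃ a c, a ≠ c ∧ (a :: W) <:+: T ∧ (c :: W) <:+: T

namespace RightSatAux

open List

/-- Two distinct witnesses from `countP ≥ 2` on a nodup list. -/
lemma two_of_countP {l : List ℕ} (hl : l.Nodup) {p : ℕ → Bool}
    (h : 2 ≤ l.countP p) :
    ∃ i ∈ l, ∃ j ∈ l, i ≠ j ∧ p i ∧ p j := by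
  rw [List.countP_eq_length_filter] at h
  have hnd : (l.filter p).Nodup := hl.filter p
  match hf : l.filter p with
  | [] => rw [hf] at h; simp at h
  | [a] => rw [hf] at h; simp at h
  | a :: b :: t =>
    rw [hf] at hnd
    have ha : a ∈ l.filter p := by rw [hf]; simp
    have hb : b ∈ l.filter p := by rw [hf]; simp
    have hab : a ≠ b := by
      intro hc; subst hc
      simp [List.nodup_cons] at hnd
    refine ⟨a, (List.mem_filter.mp ha).1, b, (List.mem_filter.mp hb).1, hab,
      (List.mem_filter.mp ha).2, (List.mem_filter.mp hb).2⟩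

/-- If counts coincide and `p` implies `q` pointwise, then `q` implies `p` on the list. -/
lemma of_countP_le {l : List ℕ} {p q : ℕ → Bool}
    (hpq : ∀ i, p i = true → q i = true)
    (hc : l.countP q ≤ l.countP p) :
    ∀ i ∈ l, q i = true → p i = true := by
  induction l with
  | nil => simp
  | cons b t ih =>
    rw [List.countP_cons, List.countP_cons] at hc
    have hmono : t.countP p ≤ t.countP q :=
      List.countP_mono_left (fun i _ => hpq i)
    intro i hi hqi
    rcases List.mem_cons.mp hi with heq | hi'
    · subst heq
      by_contra hpi
      simp only [Bool.not_eq_true] at hpi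
      rw [hpi, hqi] at hc
      simp at hc
      omega
    · refine ih ?_ i hi' hqi
      by_cases hpb : p b = true
      · rw [hpb, hpq b hpb] at hc; simp at hc; omega
      · simp only [Bool.not_eq_true] at hpb
        by_cases hqb : q b = true
        · rw [hpb, hqb] at hc; simp at hc; omega
        · simp only [Bool.not_eq_true] at hqb
          rw [hpb, hqb] at hc; simp at hc; omega

lemma prefix_length_le {α : Type*} {T' S : List α} {i : ℕ}
    (h : S <+: T'.drop i) (hS : S ≠ []) : i + S.length ≤ T'.length := by
  have h1 := h.length_le
  rw [List.length_drop] at h1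
  have h2 : 0 < S.length := List.length_pos_iff.mpr hS
  omega

lemma prefix_drop_getElem {α : Type*} {T' S : List α} {i k : ℕ}
    (h : S <+: T'.drop i) (hk : k < S.length)
    (hik : i + k < T'.length) :
    S[k] = T'[i + k] := by
  have h1 : S[k] = (T'.drop i)[k]'(lt_of_lt_of_le hk h.length_le) := h.getElem hk
  rw [h1, List.getElem_drop]

lemma prefix_extend {α : Type*} {T' S : List α} {i : ℕ}
    (h : S <+: T'.drop i) (hlt : i + S.length < T'.length) :
    S ++ [T'[i + S.length]] <+: T'.drop i := by
  have hlen : S.length < (T'.drop i).length := by rw [List.length_drop]; omega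
  have hS : S = (T'.drop i).take S.length := List.prefix_iff_eq_take.mp h
  have hget : (T'.drop i)[S.length]'hlen = T'[i + S.length] := List.getElem_drop
  have htake : (T'.drop i).take (S.length + 1) = S ++ [T'[i + S.length]] := by
    rw [List.take_succ, List.getElem?_eq_getElem hlen, hget, ← hS]
    rfl
  rw [← htake]
  exact List.take_prefix _ _

/-- Key saturation lemma: over `X ++ [dol]` with `dol ∉ X`, any nonempty `S`
occurring at least twice extends to a right-maximal string with the same
occurrence count. -/
lemma key {α : Type*} [DecidableEq α] (X : List α) (dol : α) (hd : dol ∉ X) :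
    ∀ n (S : List α), S ≠ [] →
      (X ++ [dol]).length + 1 - S.length ≤ n →
      2 ≤ occ (X ++ [dol]) S →
      ∃ V, rightMax (X ++ [dol]) (S ++ V) ∧
        occ (X ++ [dol]) (S ++ V) = occ (X ++ [dol]) S := by
  intro n
  set T' : List α := X ++ [dol] with hT'
  have hlenT : T'.length = X.length + 1 := by simp [hT']
  have hnotdol : ∀ (k : ℕ) (hk : k < T'.length - 1), T'[k]'(by omega) ≠ dol := by
    intro k hk
    rw [hlenT] at hk
    have : T'[k]'(by omega) = X[k]'(by omega) := by
      simp [hT']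
      rw [List.getElem_append_left]
    rw [this]
    intro hc
    exact hd (hc ▸ List.getElem_mem _)
  have hlastdol : T'[T'.length - 1]'(by rw [hlenT]; omega) = dol := by
    simp [hT', hlenT]
  induction n with
  | zero =>
    intro S hS hfuel hocc
    exfalso
    have h1 : 1 ≤ occ T' S := by omega
    have : ∃ i ∈ List.range (T'.length + 1),
        (fun i => decide (S <+: T'.drop i)) i = true := by
      by_contra hc
      push_neg at hc
      have : (List.range (T'.length + 1)).countP
          (fun i => decide (S <+: T'.drop i)) = 0 := by
        apply List.countP_eq_zero.mpr
        intro i hi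
        simp only [Bool.not_eq_true]
        exact Bool.not_eq_true _ ▸ (by simpa using hc i hi)
      rw [occ] at h1
      omega
    obtain ⟨i, _, hp⟩ := this
    have hpre : S <+: T'.drop i := by simpa using hp
    have := prefix_length_le hpre hS
    omega
  | succ n ih =>
    intro S hS hfuel hocc
    -- two distinct occurrences
    obtain ⟨i, hi, j, hj, hij, hpi, hpj⟩ :=
      two_of_countP List.nodup_range (by rw [occ] at hocc; exact hocc)
    rw [List.mem_range] at hi hj
    have hpi' : S <+: T'.drop i := by simpa using hpi
    have hpj' : S <+: T'.drop j := by simpa using hpj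
    -- Claim A : every occurrence ends strictly before the end
    have claimA : ∀ k, S <+: T'.drop k → k + S.length < T'.length := by
      intro k hk
      rcases lt_or_ge (k + S.length) T'.length with h | h
      · exact h
      exfalso
      have hk1 := prefix_length_le hk hS
      have hkeq : k + S.length = T'.length := le_antisymm hk1 h
      -- choose an occurrence m ≠ k
      have hm : ∃ m, m ≠ k ∧ S <+: T'.drop m := by
        by_cases hik : i = k
        · exact ⟨j, by omega, hpj'⟩
        · exact ⟨i, hik, hpi'⟩
      obtain ⟨m, hmk, hpm⟩ := hm
      have hm1 := prefix_length_le hpm hS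
      have hmlt : m + S.length < T'.length := by
        rcases lt_or_ge (m + S.length) T'.length with h' | h'
        · exact h'
        · exfalso; omega
      have hSpos : 0 < S.length := List.length_pos_iff.mpr hS
      -- last char of S via occurrence k is dol
      have hlast1 : S[S.length - 1]'(by omega) = dol := by
        have := prefix_drop_getElem hk (k := S.length - 1) (by omega) (by omega)
        rw [this]
        have : k + (S.length - 1) = T'.length - 1 := by omega
        simp only [this]
        exact hlastdol
      -- last char of S via occurrence m is not dol
      have hlast2 : S[S.length - 1]'(by omega) ≠ dol := by
        have hh := prefix_drop_getElem hpm (k := S.length - 1) (by omega) (by omega)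
        rw [hh]
        exact hnotdol (m + (S.length - 1)) (by omega)
      exact hlast2 hlast1
    -- every occurrence extends by one character, giving an infix
    have hext : ∀ k (hk : S <+: T'.drop k),
        (S ++ [T'[k + S.length]'(claimA k hk)]) <:+: T' := by
      intro k hk
      exact List.infix_iff_prefix_suffix.mpr
        ⟨T'.drop k, prefix_extend hk (claimA k hk), List.drop_suffix k T'⟩
    by_cases hrm : rightMax T' S
    · exact ⟨[], by simpa using hrm, by simp⟩
    · -- all extension characters equal
      have hdlt := claimA i hpi'
      set d : α := T'[i + S.length]'hdlt with hdd
      have hsame : ∀ k (hk : S <+: T'.drop k),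
          T'[k + S.length]'(claimA k hk) = d := by
        intro k hk
        by_contra hne
        exact hrm ⟨_, _, hne, hext k hk, hext i hpi'⟩
      have hiff : ∀ k, (S ++ [d]) <+: T'.drop k ↔ S <+: T'.drop k := by
        intro k
        constructor
        · intro h
          exact (List.prefix_append S [d]).trans h
        · intro h
          have := prefix_extend h (claimA k h)
          rwa [hsame k h] at this
      have hocceq : occ T' (S ++ [d]) = occ T' S := by
        rw [occ, occ]
        apply List.countP_congr
        intro x _
        simp only [decide_eq_true_eq]
        exact hiff x
      have hfuel' : T'.length + 1 - (S ++ [d]).length ≤ n := by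
        have h9 := prefix_length_le hpi' hS
        have h8 : (S ++ [d]).length = S.length + 1 := by simp
        rw [h8]
        omega
      obtain ⟨V', hrm', hocc'⟩ := ih (S ++ [d]) (by simp) hfuel' (by omega)
      refine ⟨[d] ++ V', ?_, ?_⟩
      · rwa [← List.append_assoc]
      · rw [← List.append_assoc, hocc', hocceq]

end RightSatAux

/-- with `T' = # · T · $`, every nonempty left-maximal `W` over
`Σ` occurring at least twice has a right extension `WV` that is
right-maximal, has the same number of occurrences, and the same left
extensions; hence `WV` is a maximal repeat. -/
theorem right_saturate_leftMax {α : Type*} [DecidableEq α]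
    (T W : List α) (hash dol : α)
    (hh : hash ∉ T) (hd : dol ∉ T) (hhd : hash ≠ dol)
    (hW : W ≠ []) (hWsig : ∀ x ∈ W, x ≠ hash ∧ x ≠ dol)
    (hlm : leftMax (hash :: T ++ [dol]) W)
    (hocc : 2 ≤ occ (hash :: T ++ [dol]) W) :
    ∃ V : List α,
      rightMax (hash :: T ++ [dol]) (W ++ V) ∧
      occ (hash :: T ++ [dol]) (W ++ V) = occ (hash :: T ++ [dol]) W ∧
      (∀ a : α, (a :: (W ++ V)) <:+: (hash :: T ++ [dol]) ↔
        (a :: W) <:+: (hash :: T ++ [dol])) ∧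
      leftMax (hash :: T ++ [dol]) (W ++ V) := by
  classical
  set T' : List α := hash :: T ++ [dol] with hT'
  have hXeq : T' = (hash :: T) ++ [dol] := by simp [hT']
  have hdnot : dol ∉ hash :: T := by
    intro hc
    rcases List.mem_cons.mp hc with h | h
    · exact hhd h.symm
    · exact hd h
  have hocc2 : 2 ≤ occ ((hash :: T) ++ [dol]) W := by rwa [← hXeq]
  obtain ⟨V, hrm, hocceq⟩ := RightSatAux.key (hash :: T) dol hdnot
    (((hash :: T) ++ [dol]).length + 1) W hW (by omega) hocc2
  rw [← hXeq] at hrm hocceq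
  -- pointwise: every occurrence of W is an occurrence of W ++ V
  have hpt : ∀ i ∈ List.range (T'.length + 1),
      W <+: T'.drop i → (W ++ V) <+: T'.drop i := by
    have h1 := RightSatAux.of_countP_le
      (l := List.range (T'.length + 1))
      (p := fun i => decide ((W ++ V) <+: T'.drop i))
      (q := fun i => decide (W <+: T'.drop i))
      (fun i hi => by
        simp only [decide_eq_true_eq] at hi ⊢
        exact (List.prefix_append W V).trans hi)
      (by rw [occ, occ] at hocceq; omega)
    intro i hi hW'
    have := h1 i hi (by simpa using hW')
    simpa using this
  have hiffa : ∀ a : α, (a :: (W ++ V)) <:+: T' ↔ (a :: W) <:+: T' := by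
    intro a
    constructor
    · intro h
      have hp : (a :: W) <+: (a :: (W ++ V)) :=
        List.cons_prefix_cons.mpr ⟨rfl, List.prefix_append W V⟩
      exact hp.isInfix.trans h
    · intro h
      obtain ⟨t, htp, hts⟩ := List.infix_iff_prefix_suffix.mp h
      have hteq : t = T'.drop (T'.length - t.length) := List.suffix_iff_eq_drop.mp hts
      set i := T'.length - t.length with hi
      have hpre : (a :: W) <+: T'.drop i := hteq ▸ htp
      have hilt : i < T'.length := by
        have h1 := hpre.length_le
        rw [List.length_drop] at h1
        simp only [List.length_cons] at h1
        omega
      -- drop i = a :: drop (i+1)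
      obtain ⟨t2, ht2⟩ := hpre
      have htail : (T'.drop i).tail = T'.drop (i + 1) := List.tail_drop
      have hdropi : T'.drop i = a :: T'.drop (i + 1) := by
        rw [← ht2] at htail ⊢
        simp at htail
        simp [← htail]
      have hWpre : W <+: T'.drop (i + 1) := by
        refine ⟨t2, ?_⟩
        have : a :: (W ++ t2) = a :: T'.drop (i + 1) := by
          rw [← hdropi, ← ht2]; simp
        exact (List.cons.injEq _ _ _ _ ▸ this).2
      have hi1 : i + 1 ∈ List.range (T'.length + 1) := by
        rw [List.mem_range]; omega
      have hWV : (W ++ V) <+: T'.drop (i + 1) := hpt (i + 1) hi1 hWpre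
      have : (a :: (W ++ V)) <+: T'.drop i := by
        rw [hdropi]
        exact List.cons_prefix_cons.mpr ⟨rfl, hWV⟩
      exact List.infix_iff_prefix_suffix.mpr ⟨T'.drop i, this, List.drop_suffix i T'⟩
  refine ⟨V, hrm, hocceq, hiffa, ?_⟩
  obtain ⟨a, c, hac, h1, h2⟩ := hlm
  exact ⟨a, c, hac, (hiffa a).mpr h1, (hiffa c).mpr h2⟩
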